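/- Assume all rewards r(i,a,j) are nonnegative and let V_max = (max_π ‖r_π‖_∞)/(1−γ). Let (π_k) be a sequence of policies generated by Simplex-PI from any initial policy π_0. Then for every ε > 0 and every index k with k ≥ (n/(1−γ)) log(n V_max/ε) at which π_k is defined, the policy π_k is ε-optimal: ‖v_* − v_{π_k}‖_∞ ≤ ε. -/
import Mathlib


open Matrix BigOperators

/-- A finite discounted MDP with `n ≥ 1` states and `m ≥ 2` actions:
transition probabilities `p i a j`, rewards `r i a j`, discount factor `γ ∈ (0,1)`. -/
structure MDP (n m : ℕ) : Type where
  n_pos : 1 ≤ n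
  m_ge_two : 2 ≤ m
  p : Fin n → Fin m → Fin n → ℝ
  r : Fin n → Fin m → Fin n → ℝ
  γ : ℝ
  p_nonneg : ∀ i a j, 0 ≤ p i a j
  p_sum : ∀ i a, ∑ j, p i a j = 1
  γ_pos : 0 < γ
  γ_lt_one : γ < 1

/-- A (stationary deterministic) policy. -/
abbrev MDP.Policy (n m : ℕ) : Type := Fin n → Fin m

namespace MDP

variable {n m : ℕ}

/-- The row-stochastic transition matrix `P_π` of a policy. -/
def P (M : MDP n m) (π : Policy n m) : Matrix (Fin n) (Fin n) ℝ :=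
  Matrix.of fun i j => M.p i (π i) j

/-- The expected reward vector `r_π` of a policy. -/
def rPol (M : MDP n m) (π : Policy n m) : Fin n → ℝ :=
  fun i => ∑ j, M.p i (π i) j * M.r i (π i) j

/-- The Bellman operator `T_π v = r_π + γ P_π v` of a policy. -/
def Tpol (M : MDP n m) (π : Policy n m) (v : Fin n → ℝ) : Fin n → ℝ :=
  fun i => M.rPol π i + M.γ * (M.P π *ᵥ v) i

/-- `IsValue M V` asserts that, for every policy `π`, `V π` is the value function `v_π`,
i.e. the (unique) solution of the Bellman equation `v_π = T_π v_π`. -/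
def IsValue (M : MDP n m) (V : Policy n m → Fin n → ℝ) : Prop :=
  ∀ π, V π = M.Tpol π (V π)

/-- The optimal Bellman operator `T v = max_π T_π v` (componentwise maximum). -/
noncomputable def T (M : MDP n m) (v : Fin n → ℝ) : Fin n → ℝ :=
  fun i => ⨆ π : Policy n m, M.Tpol π v i

/-- The optimal value function `v_*`, the componentwise maximum of `v_π` over policies. -/
noncomputable def vStar (M : MDP n m) (V : Policy n m → Fin n → ℝ) : Fin n → ℝ :=
  fun i => ⨆ π : Policy n m, V π i

/-- A policy is optimal when its value equals `v_*`. -/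
def IsOptimal (M : MDP n m) (V : Policy n m → Fin n → ℝ) (π : Policy n m) : Prop :=
  V π = M.vStar V

/-- `π'` is greedy with respect to `v_π`: `T_{π'} v_π = T v_π`.  One step of Howard's PI
from a non-optimal `π` moves to such a `π'`. -/
def Greedy (M : MDP n m) (V : Policy n m → Fin n → ℝ) (π π' : Policy n m) : Prop :=
  M.Tpol π' (V π) = M.T (V π)

/-- One step of Simplex-PI: `π'` agrees with `π` except at a single state `s` maximizing
the advantage `a_π(i) = (T v_π - v_π)(i)`, where `π'(s)` achieves `T v_π(s)`. -/
def SimplexStep (M : MDP n m) (V : Policy n m → Fin n → ℝ) (π π' : Policy n m) : Prop :=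
  ∃ s : Fin n, (∀ i, i ≠ s → π' i = π i) ∧
    (∀ i, M.T (V π) i - V π i ≤ M.T (V π) s - V π s) ∧
    M.Tpol π' (V π) s = M.T (V π) s

/-- The vector `x_π = (I - γ P_πᵀ)⁻¹ 1`. -/
noncomputable def xPol (M : MDP n m) (π : Policy n m) : Fin n → ℝ :=
  ((1 : Matrix (Fin n) (Fin n) ℝ) - M.γ • (M.P π)ᵀ)⁻¹ *ᵥ (fun _ => (1 : ℝ))

/-- `R` is a recurrent class of `π`: nonempty, closed under positive-probability
transitions of `P_π`, and every state of `R` is reachable from every other state of `R`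
along positive-probability transitions.  (For a deterministic MDP this is the notion of
a cycle of `π`.) -/
def IsRecClass (M : MDP n m) (π : Policy n m) (R : Set (Fin n)) : Prop :=
  R.Nonempty ∧ (∀ i ∈ R, ∀ j, 0 < M.P π i j → j ∈ R) ∧
    ∀ i ∈ R, ∀ j ∈ R, Relation.ReflTransGen (fun a b => 0 < M.P π a b) i j

/-- A state is recurrent for `π` if it belongs to some recurrent class of `π`. -/
def Recurrent (M : MDP n m) (π : Policy n m) (i : Fin n) : Prop :=
  ∃ R : Set (Fin n), M.IsRecClass π R ∧ i ∈ R

/-- A state is transient for `π` if it is not recurrent for `π`. -/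
def Transient (M : MDP n m) (π : Policy n m) (i : Fin n) : Prop :=
  ¬ M.Recurrent π i

/-- Assumption 1: `τ_t, τ_r ≥ 1` with `x_π(i) ≤ τ_t` for transient states and
`x_π(i) ≥ n / ((1-γ) τ_r)` for recurrent states, for every policy `π`. -/
def Ass1 (M : MDP n m) (τt τr : ℝ) : Prop :=
  1 ≤ τt ∧ 1 ≤ τr ∧
    (∀ π i, M.Transient π i → M.xPol π i ≤ τt) ∧
    (∀ π i, M.Recurrent π i → (n : ℝ) / ((1 - M.γ) * τr) ≤ M.xPol π i)

/-- Assumption 2: the state space is partitioned into a set of states transient for every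
policy and a set of states recurrent for every policy. -/
def Ass2 (M : MDP n m) : Prop :=
  ∃ 𝒯 ℛ : Set (Fin n), 𝒯 ∪ ℛ = Set.univ ∧ 𝒯 ∩ ℛ = ∅ ∧
    ∀ π : Policy n m, (∀ i ∈ 𝒯, M.Transient π i) ∧ (∀ i ∈ ℛ, M.Recurrent π i)

/-- The MDP is deterministic when every transition probability is 0 or 1. -/
def Deterministic (M : MDP n m) : Prop :=
  ∀ i a j, M.p i a j = 0 ∨ M.p i a j = 1

/-- `V_max = (max_π ‖r_π‖_∞) / (1 - γ)`. -/
noncomputable def Vmax (M : MDP n m) : ℝ :=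
  (⨆ π : Policy n m, ‖M.rPol π‖) / (1 - M.γ)

end MDP

section Aux
open MDP
variable {n m : ℕ} (M : MDP n m)

lemma aux_mulVec_apply (π : MDP.Policy n m) (v : Fin n → ℝ) (i : Fin n) :
    (M.P π *ᵥ v) i = ∑ j, M.p i (π i) j * v j := rfl

lemma aux_mulVec_le_mulVec (π : MDP.Policy n m) {u v : Fin n → ℝ}
    (h : ∀ j, u j ≤ v j) (i : Fin n) : (M.P π *ᵥ u) i ≤ (M.P π *ᵥ v) i := by
  simp only [aux_mulVec_apply]
  exact Finset.sum_le_sum fun j _ => mul_le_mul_of_nonneg_left (h j) (M.p_nonneg i (π i) j)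

lemma aux_mulVec_const (π : MDP.Policy n m) (c : ℝ) (i : Fin n) :
    (M.P π *ᵥ fun _ => c) i = c := by
  simp only [aux_mulVec_apply, ← Finset.sum_mul, M.p_sum, one_mul]

lemma aux_subinv_nonneg (π : MDP.Policy n m) (d : Fin n → ℝ)
    (h : ∀ i, M.γ * (M.P π *ᵥ d) i ≤ d i) (i : Fin n) : 0 ≤ d i := by
  have key : ∀ t : ℕ, ∀ i, -(M.γ ^ t * ‖d‖) ≤ d i := by
    intro t
    induction t with
    | zero =>
      intro i
      have h1 := norm_le_pi_norm d i
      rw [Real.norm_eq_abs] at h1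
      have h2 := (abs_le.mp h1).1
      simpa using h2
    | succ t ih =>
      intro i
      have h1 : -(M.γ ^ t * ‖d‖) ≤ (M.P π *ᵥ d) i := by
        calc -(M.γ ^ t * ‖d‖) = (M.P π *ᵥ fun _ => -(M.γ ^ t * ‖d‖)) i :=
              (aux_mulVec_const M π _ i).symm
          _ ≤ (M.P π *ᵥ d) i := aux_mulVec_le_mulVec M π ih i
      have h2 : M.γ * -(M.γ ^ t * ‖d‖) ≤ M.γ * (M.P π *ᵥ d) i :=
        mul_le_mul_of_nonneg_left h1 M.γ_pos.le
      have h3 := h2.trans (h i)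
      calc -(M.γ ^ (t + 1) * ‖d‖) = M.γ * -(M.γ ^ t * ‖d‖) := by ring
        _ ≤ d i := h3
  have hlim : Filter.Tendsto (fun t : ℕ => -(M.γ ^ t * ‖d‖)) Filter.atTop (nhds 0) := by
    have h0 := tendsto_pow_atTop_nhds_zero_of_lt_one M.γ_pos.le M.γ_lt_one
    simpa using (h0.mul_const ‖d‖).neg
  exact le_of_tendsto hlim (Filter.Eventually.of_forall fun t => key t i)

lemma aux_le_value (V : MDP.Policy n m → Fin n → ℝ) (hV : M.IsValue V)
    (π : MDP.Policy n m) (u : Fin n → ℝ)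
    (h : ∀ i, u i ≤ M.Tpol π u i) (i : Fin n) : u i ≤ V π i := by
  have hd := aux_subinv_nonneg M π (V π - u) ?_ i
  · have := hd; simp only [Pi.sub_apply] at this; linarith
  · intro i
    have h1 : V π i = M.Tpol π (V π) i := congrFun (hV π) i
    have h2 := h i
    have h3 : (M.P π *ᵥ (V π - u)) i = (M.P π *ᵥ V π) i - (M.P π *ᵥ u) i := by
      rw [Matrix.mulVec_sub]; rfl
    simp only [MDP.Tpol] at h1 h2
    simp only [Pi.sub_apply, h3]
    nlinarith [M.γ_pos]

lemma aux_value_le (V : MDP.Policy n m → Fin n → ℝ) (hV : M.IsValue V)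
    (π : MDP.Policy n m) (u : Fin n → ℝ)
    (h : ∀ i, M.Tpol π u i ≤ u i) (i : Fin n) : V π i ≤ u i := by
  have hd := aux_subinv_nonneg M π (u - V π) ?_ i
  · have := hd; simp only [Pi.sub_apply] at this; linarith
  · intro i
    have h1 : V π i = M.Tpol π (V π) i := congrFun (hV π) i
    have h2 := h i
    have h3 : (M.P π *ᵥ (u - V π)) i = (M.P π *ᵥ u) i - (M.P π *ᵥ V π) i := by
      rw [Matrix.mulVec_sub]; rfl
    simp only [MDP.Tpol] at h1 h2
    simp only [Pi.sub_apply, h3]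
    nlinarith [M.γ_pos]

lemma aux_nonempty (M' : MDP n m) : Nonempty (MDP.Policy n m) :=
  ⟨fun _ => ⟨0, lt_of_lt_of_le two_pos M'.m_ge_two⟩⟩

lemma aux_Tpol_le_T (v : Fin n → ℝ) (π : MDP.Policy n m) (i : Fin n) :
    M.Tpol π v i ≤ M.T v i := by
  have h := le_ciSup (f := fun ρ : MDP.Policy n m => M.Tpol ρ v i)
    (Set.Finite.bddAbove (Set.finite_range _)) π
  simpa [MDP.T] using h

lemma aux_T_le (v : Fin n → ℝ) (i : Fin n) {c : ℝ}
    (h : ∀ π, M.Tpol π v i ≤ c) : M.T v i ≤ c := by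
  haveI := aux_nonempty M
  simp only [MDP.T]
  exact ciSup_le h

lemma aux_le_vStar (V : MDP.Policy n m → Fin n → ℝ) (π : MDP.Policy n m) (i : Fin n) :
    V π i ≤ M.vStar V i := by
  have h := le_ciSup (f := fun ρ : MDP.Policy n m => V ρ i)
    (Set.Finite.bddAbove (Set.finite_range _)) π
  simpa [MDP.vStar] using h

lemma aux_vStar_le (V : MDP.Policy n m → Fin n → ℝ) (i : Fin n) {c : ℝ}
    (h : ∀ π, V π i ≤ c) : M.vStar V i ≤ c := by
  haveI := aux_nonempty M
  simp only [MDP.vStar]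
  exact ciSup_le h

lemma aux_Tpol_add (π : MDP.Policy n m) (v w : Fin n → ℝ) (i : Fin n) :
    M.Tpol π (fun j => v j + w j) i = M.Tpol π v i + M.γ * (M.P π *ᵥ w) i := by
  have h1 : (M.P π *ᵥ fun j => v j + w j) i = (M.P π *ᵥ v) i + (M.P π *ᵥ w) i := by
    simp only [aux_mulVec_apply, mul_add, Finset.sum_add_distrib]
  simp only [MDP.Tpol, h1]; ring

lemma aux_Tpol_add_const (π : MDP.Policy n m) (v : Fin n → ℝ) (c : ℝ) (i : Fin n) :
    M.Tpol π (fun j => v j + c) i = M.Tpol π v i + M.γ * c := by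
  rw [aux_Tpol_add M π v (fun _ => c) i, aux_mulVec_const]

lemma aux_Tpol_congr (π π' : MDP.Policy n m) (v : Fin n → ℝ) (i : Fin n)
    (h : π' i = π i) : M.Tpol π' v i = M.Tpol π v i := by
  simp only [MDP.Tpol, MDP.rPol, aux_mulVec_apply, h]

end Aux

/-- with nonnegative rewards, Simplex-PI produces an `ε`-optimal policy
after at most `(n/(1-γ)) log(n V_max/ε)` iterations. -/
theorem simplex_eps_optimal {n m : ℕ} (M : MDP n m)
    (hr : ∀ i a j, 0 ≤ M.r i a j)
    (V : MDP.Policy n m → Fin n → ℝ) (hV : M.IsValue V)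
    (π : ℕ → MDP.Policy n m) (K : ℕ)
    (hrun : ∀ k < K, ¬ M.IsOptimal V (π k) ∧ M.SimplexStep V (π k) (π (k + 1)))
    (ε : ℝ) (hε : 0 < ε) (k : ℕ) (hkK : k ≤ K)
    (hk : ((n : ℝ) / (1 - M.γ)) * Real.log ((n : ℝ) * M.Vmax / ε) ≤ (k : ℝ)) :
    ‖M.vStar V - V (π k)‖ ≤ ε := by
  have hγ1 : 0 < 1 - M.γ := by linarith [M.γ_lt_one]
  have hn : 0 < (n : ℝ) := by exact_mod_cast M.n_pos
  have hn1 : (1 : ℝ) ≤ (n : ℝ) := by exact_mod_cast M.n_pos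
  -- rewards of policies are nonnegative
  have hrP : ∀ ρ i, 0 ≤ M.rPol ρ i := fun ρ i =>
    Finset.sum_nonneg fun j _ => mul_nonneg (M.p_nonneg i (ρ i) j) (hr i (ρ i) j)
  -- values are nonnegative
  have hVnn : ∀ ρ i, 0 ≤ V ρ i := by
    intro ρ i
    have h := aux_le_value M V hV ρ (fun _ => 0) ?_ i
    · exact h
    · intro i
      simp only [MDP.Tpol]
      have h0 : (M.P ρ *ᵥ fun _ => (0 : ℝ)) i = 0 := aux_mulVec_const M ρ 0 i
      rw [h0]
      have := hrP ρ i
      linarith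
  -- Vmax facts
  obtain ⟨Rmax, hRmax⟩ : ∃ R : ℝ, R = ⨆ ρ : MDP.Policy n m, ‖M.rPol ρ‖ := ⟨_, rfl⟩
  have hVdef : M.Vmax = Rmax / (1 - M.γ) := by rw [MDP.Vmax, ← hRmax]
  haveI := aux_nonempty M
  have hrle : ∀ ρ i, M.rPol ρ i ≤ Rmax := by
    intro ρ i
    have h1 : M.rPol ρ i ≤ ‖M.rPol ρ‖ := by
      have := norm_le_pi_norm (M.rPol ρ) i
      rw [Real.norm_eq_abs] at this
      exact (le_abs_self _).trans this
    have h2 : ‖M.rPol ρ‖ ≤ Rmax := by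
      rw [hRmax]
      exact le_ciSup (f := fun ρ : MDP.Policy n m => ‖M.rPol ρ‖)
        (Set.Finite.bddAbove (Set.finite_range _)) ρ
    linarith
  have hRnn : 0 ≤ Rmax := by
    have h1 : ‖M.rPol (Classical.arbitrary (MDP.Policy n m))‖
        ≤ ⨆ ρ : MDP.Policy n m, ‖M.rPol ρ‖ :=
      le_ciSup (f := fun ρ : MDP.Policy n m => ‖M.rPol ρ‖)
        (Set.Finite.bddAbove (Set.finite_range _)) _
    rw [hRmax]
    exact (norm_nonneg _).trans h1
  have hVmnn : 0 ≤ M.Vmax := by rw [hVdef]; exact div_nonneg hRnn hγ1.le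
  have hγVm : M.γ * M.Vmax = M.Vmax - Rmax := by rw [hVdef]; field_simp; ring
  -- values are bounded by Vmax
  have hvle : ∀ ρ i, V ρ i ≤ M.Vmax := by
    intro ρ i
    apply aux_value_le M V hV ρ (fun _ => M.Vmax) ?_ i
    intro i
    simp only [MDP.Tpol]
    rw [aux_mulVec_const M ρ _ i]
    have := hrle ρ i
    linarith [hγVm]
  have hstarle : ∀ i, M.vStar V i ≤ M.Vmax := fun i => aux_vStar_le M V i (fun ρ => hvle ρ i)
  -- the gap and its sum
  obtain ⟨S, hS⟩ : ∃ S : ℕ → ℝ, S = fun j => ∑ i, (M.vStar V i - V (π j) i) := ⟨_, rfl⟩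
  have hSeq : ∀ t, S t = ∑ i, (M.vStar V i - V (π t) i) := fun t => by rw [hS]
  have hΔnn : ∀ j i, 0 ≤ M.vStar V i - V (π j) i := fun j i =>
    sub_nonneg.2 (aux_le_vStar M V (π j) i)
  have hΔle : ∀ j i, M.vStar V i - V (π j) i ≤ M.Vmax := by
    intro j i; have := hstarle i; have := hVnn (π j) i; linarith
  have hSnn : ∀ j, 0 ≤ S j := by
    intro j; rw [hSeq]; exact Finset.sum_nonneg fun i _ => hΔnn j i
  have hS0 : S 0 ≤ (n : ℝ) * M.Vmax := by
    rw [hSeq]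
    calc ∑ i, (M.vStar V i - V (π 0) i) ≤ ∑ _i : Fin n, M.Vmax :=
          Finset.sum_le_sum fun i _ => hΔle 0 i
      _ = (n : ℝ) * M.Vmax := by
          simp [Finset.sum_const, Finset.card_univ, nsmul_eq_mul]
  -- one-step decrease
  have hstep : ∀ j < K, S (j + 1) ≤ (1 - (1 - M.γ) / n) * S j := by
    intro j hj
    obtain ⟨-, s, hagree, hmax, hach⟩ := hrun j hj
    have hTfix : ∀ i, M.Tpol (π j) (V (π j)) i = V (π j) i :=
      fun i => (congrFun (hV (π j)) i).symm
    set a := M.T (V (π j)) s - V (π j) s with hadef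
    have ha0 : 0 ≤ a := by
      have h1 := aux_Tpol_le_T M (V (π j)) (π j) s
      rw [hTfix s] at h1
      simp only [hadef]; linarith
    -- upper bound on the gap via the advantage
    have hub : ∀ i, M.vStar V i ≤ V (π j) i + a / (1 - M.γ) := by
      intro i
      apply aux_vStar_le
      intro ρ
      apply aux_value_le M V hV ρ (fun i => V (π j) i + a / (1 - M.γ)) ?_ i
      intro i
      rw [aux_Tpol_add_const]
      have h1 := aux_Tpol_le_T M (V (π j)) ρ i
      have h2 : M.T (V (π j)) i ≤ V (π j) i + a := by have := hmax i; linarith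
      have h3 : M.γ * (a / (1 - M.γ)) + a = a / (1 - M.γ) := by field_simp; ring
      linarith
    have hfin : (1 - M.γ) / n * S j ≤ a := by
      have hSub : S j ≤ (n : ℝ) * (a / (1 - M.γ)) := by
        rw [hSeq]
        calc ∑ i, (M.vStar V i - V (π j) i) ≤ ∑ _i : Fin n, a / (1 - M.γ) :=
              Finset.sum_le_sum fun i _ => by have := hub i; linarith
          _ = (n : ℝ) * (a / (1 - M.γ)) := by
              simp [Finset.sum_const, Finset.card_univ, nsmul_eq_mul]
      have e1 : (1 - M.γ) * ((n : ℝ) * (a / (1 - M.γ))) = (n : ℝ) * a := by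
        field_simp
      have e2 := mul_le_mul_of_nonneg_left hSub hγ1.le
      rw [e1] at e2
      rw [div_mul_eq_mul_div, div_le_iff₀ hn]
      linarith
    -- lower bound on improvement
    have hlb : ∀ i, V (π j) i + (if i = s then a else 0) ≤ V (π (j + 1)) i := by
      intro i
      apply aux_le_value M V hV (π (j + 1)) (fun i => V (π j) i + (if i = s then a else 0)) ?_ i
      intro i
      rw [aux_Tpol_add]
      show V (π j) i + (if i = s then a else 0) ≤ _
      have hPe : 0 ≤ (M.P (π (j + 1)) *ᵥ fun i => if i = s then a else 0) i := by
        rw [aux_mulVec_apply]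
        refine Finset.sum_nonneg fun l _ => mul_nonneg (M.p_nonneg _ _ _) ?_
        by_cases hl : l = s <;> simp [hl, ha0]
      by_cases hi : i = s
      · have ht : (if i = s then a else 0) = a := if_pos hi
        have h2 : M.Tpol (π (j + 1)) (V (π j)) i = V (π j) i + a := by
          rw [hi, hach, hadef]; ring
        rw [ht, h2]
        nlinarith [M.γ_pos, hPe]
      · have ht : (if i = s then a else 0) = 0 := if_neg hi
        have h2 : M.Tpol (π (j + 1)) (V (π j)) i = V (π j) i := by
          rw [aux_Tpol_congr M (π j) (π (j + 1)) (V (π j)) i (hagree i hi), hTfix]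
        rw [ht, h2]
        nlinarith [M.γ_pos, hPe]
    have hSstep : S (j + 1) ≤ S j - a := by
      rw [hSeq, hSeq]
      have hsum : ∑ i, (M.vStar V i - V (π (j + 1)) i)
          ≤ ∑ i, (M.vStar V i - V (π j) i - (if i = s then a else 0)) :=
        Finset.sum_le_sum fun i _ => by have := hlb i; linarith
      have hsplit : ∑ i, (M.vStar V i - V (π j) i - (if i = s then a else 0))
          = (∑ i, (M.vStar V i - V (π j) i)) - a := by
        rw [Finset.sum_sub_distrib]
        congr 1
        simp [Finset.sum_ite_eq']
      linarith [hsum, hsplit]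
    have hexpand : (1 - (1 - M.γ) / n) * S j = S j - (1 - M.γ) / n * S j := by ring
    linarith
  -- iterate the decrease
  have hρ0 : 0 ≤ 1 - (1 - M.γ) / n := by
    have h1 : (1 - M.γ) / n ≤ 1 := by
      rw [div_le_one hn]; linarith [M.γ_pos]
    linarith
  have hSk : ∀ j, j ≤ K → S j ≤ (1 - (1 - M.γ) / n) ^ j * ((n : ℝ) * M.Vmax) := by
    intro j
    induction j with
    | zero => intro _; simpa using hS0
    | succ j ih =>
      intro hjK
      have hj : j < K := Nat.lt_of_succ_le hjK
      have h1 := hstep j hj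
      have h2 := ih hj.le
      have h3 := mul_le_mul_of_nonneg_left h2 hρ0
      calc S (j + 1) ≤ (1 - (1 - M.γ) / n) * S j := h1
        _ ≤ (1 - (1 - M.γ) / n) * ((1 - (1 - M.γ) / n) ^ j * ((n : ℝ) * M.Vmax)) := h3
        _ = (1 - (1 - M.γ) / n) ^ (j + 1) * ((n : ℝ) * M.Vmax) := by ring
  -- numeric bound
  have hnum : (1 - (1 - M.γ) / n) ^ k * ((n : ℝ) * M.Vmax) ≤ ε := by
    rcases eq_or_lt_of_le hVmnn with hV0 | hV0
    · rw [← hV0]; simp; positivity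
    · have hC : 0 < (n : ℝ) * M.Vmax := mul_pos hn hV0
      have h1 : 1 - (1 - M.γ) / n ≤ Real.exp (-((1 - M.γ) / n)) := by
        have := Real.add_one_le_exp (-((1 - M.γ) / n)); linarith
      have h2 : (1 - (1 - M.γ) / n) ^ k ≤ Real.exp (-((1 - M.γ) / n)) ^ k :=
        pow_le_pow_left₀ hρ0 h1 k
      rw [← Real.exp_nat_mul] at h2
      have h3 : Real.log ((n : ℝ) * M.Vmax / ε) ≤ (k : ℝ) * ((1 - M.γ) / n) := by
        have hne1 : (n : ℝ) ≠ 0 := hn.ne'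
        have hne2 : (1 - M.γ) ≠ 0 := hγ1.ne'
        have e1 : (1 - M.γ) / (n : ℝ) * ((n : ℝ) / (1 - M.γ)) = 1 := by
          field_simp
        have h4 := mul_le_mul_of_nonneg_left hk (le_of_lt (div_pos hγ1 hn))
        have e2 : (1 - M.γ) / (n : ℝ) * ((n : ℝ) / (1 - M.γ) * Real.log ((n : ℝ) * M.Vmax / ε))
            = Real.log ((n : ℝ) * M.Vmax / ε) := by
          rw [← mul_assoc, e1, one_mul]
        rw [e2] at h4
        linarith [h4]
      have h5 : (k : ℝ) * -((1 - M.γ) / n) ≤ -Real.log ((n : ℝ) * M.Vmax / ε) := by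
        have : (k : ℝ) * -((1 - M.γ) / n) = -((k : ℝ) * ((1 - M.γ) / n)) := by ring
        rw [this]; linarith
      have h6 := Real.exp_le_exp.2 h5
      have h7 : Real.exp (-Real.log ((n : ℝ) * M.Vmax / ε)) = ε / ((n : ℝ) * M.Vmax) := by
        rw [Real.exp_neg, Real.exp_log (div_pos hC hε), inv_div]
      have h8 : (1 - (1 - M.γ) / n) ^ k ≤ ε / ((n : ℝ) * M.Vmax) := by
        rw [← h7]; exact h2.trans h6
      calc (1 - (1 - M.γ) / n) ^ k * ((n : ℝ) * M.Vmax)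
          ≤ ε / ((n : ℝ) * M.Vmax) * ((n : ℝ) * M.Vmax) :=
            mul_le_mul_of_nonneg_right h8 hC.le
        _ = ε := div_mul_cancel₀ ε hC.ne'
  have hSfin : S k ≤ ε := (hSk k hkK).trans hnum
  -- conclude in the sup norm
  have hcomp : ∀ i, M.vStar V i - V (π k) i ≤ S k := by
    intro i
    rw [hSeq]
    exact Finset.single_le_sum (f := fun i => M.vStar V i - V (π k) i)
      (fun i _ => hΔnn k i) (Finset.mem_univ i)
  rw [pi_norm_le_iff_of_nonneg hε.le]
  intro i
  rw [Pi.sub_apply, Real.norm_eq_abs, abs_le]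
  constructor
  · have := hΔnn k i; linarith
  · have := hcomp i; linarith
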